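/- Let (N_k) be a sequence of integers such that N_k = Σ_{i=1}^r ρ_i λ_i^k for all k ≥ 1, where λ_1, ..., λ_r are distinct nonzero complex numbers and ρ_1, ..., ρ_r are nonzero integers, and suppose λ_i and λ_j are roots of the same irreducible polynomial over ℚ. Then ρ_i = ρ_j. -/

import Mathlib

open Polynomial Finset

lemma vand_aux (S : Finset ℂ) (c : ℂ → ℂ)
    (h : ∀ t < S.card, ∑ z ∈ S, c z * z ^ t = 0) :
    ∀ z ∈ S, c z = 0 := by
  intro z0 hz0
  set p : Polynomial ℂ := ∏ w ∈ S.erase z0, (X - C w) with hp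
  have hdeg : p.natDegree < S.card := by
    rw [hp, natDegree_prod _ _ (fun w _ => X_sub_C_ne_zero w)]
    simp only [natDegree_X_sub_C, Finset.sum_const, smul_eq_mul, mul_one]
    rw [card_erase_of_mem hz0]
    exact Nat.sub_lt (card_pos.mpr ⟨z0, hz0⟩) one_pos
  have hsum : ∑ z ∈ S, c z * p.eval z = 0 := by
    have h1 : ∀ z ∈ S, c z * p.eval z
        = ∑ t ∈ Finset.range S.card, p.coeff t * (c z * z ^ t) := by
      intro z _
      rw [eval_eq_sum_range' hdeg, Finset.mul_sum]
      exact Finset.sum_congr rfl (fun t _ => by ring)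
    rw [Finset.sum_congr rfl h1, Finset.sum_comm]
    refine Finset.sum_eq_zero (fun t ht => ?_)
    rw [← Finset.mul_sum, h t (Finset.mem_range.mp ht), mul_zero]
  have h2 : ∑ z ∈ S, c z * p.eval z = c z0 * p.eval z0 := by
    refine Finset.sum_eq_single z0 (fun z hz hne => ?_) (fun h => absurd hz0 h)
    have : p.eval z = 0 := by
      rw [hp, eval_prod]
      exact Finset.prod_eq_zero (Finset.mem_erase.mpr ⟨hne, hz⟩) (by simp)
    rw [this, mul_zero]
  have h3 : p.eval z0 ≠ 0 := by
    rw [hp, eval_prod]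
    refine Finset.prod_ne_zero_iff.mpr (fun w hw => ?_)
    simp only [eval_sub, eval_X, eval_C]
    exact sub_ne_zero.mpr (Ne.symm (Finset.mem_erase.mp hw).1)
  have := h2.symm.trans hsum
  exact (mul_eq_zero.mp this).resolve_right h3

lemma fib_sum {n : ℕ} (S : Finset ℂ) (g : Fin n → ℂ) (hg : ∀ m, g m ∈ S)
    (w : Fin n → ℂ) (t : ℕ) :
    ∑ z ∈ S, (∑ m ∈ Finset.univ.filter (fun m => g m = z), w m) * z ^ t
      = ∑ m, w m * g m ^ t := by
  rw [← Finset.sum_fiberwise_of_maps_to (fun m _ => hg m) (fun m => w m * g m ^ t)]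
  refine Finset.sum_congr rfl (fun z _ => ?_)
  rw [Finset.sum_mul]
  refine Finset.sum_congr rfl (fun m hm => ?_)
  rw [(Finset.mem_filter.mp hm).2]

lemma filter_eq_single {n : ℕ} {g : Fin n → ℂ} (hg : Function.Injective g) (m0 : Fin n) :
    Finset.univ.filter (fun m => g m = g m0) = {m0} := by
  ext m; simp [hg.eq_iff]

theorem conjugate_roots_equal_coeff (r : ℕ) (lam : Fin r → ℂ) (ρ : Fin r → ℤ)
    (hlam_inj : Function.Injective lam) (hlam_ne : ∀ i, lam i ≠ 0)
    (hρ_ne : ∀ i, ρ i ≠ 0)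
    (N : ℕ → ℤ)
    (hN : ∀ k : ℕ, 1 ≤ k → (N k : ℂ) = ∑ i, (ρ i : ℂ) * lam i ^ k)
    (i j : Fin r) (q : Polynomial ℚ) (hq : Irreducible q)
    (hi : Polynomial.aeval (lam i) q = 0) (hj : Polynomial.aeval (lam j) q = 0) :
    ρ i = ρ j := by
  have halg : ∀ m, IsIntegral ℚ (lam m) := by
    classical
    -- linear dependence among shifted rows of N
    have hdep : ¬ LinearIndependent ℚ
        (fun t : Fin (r+1) => fun s : Fin r => ((N ((t:ℕ) + (s:ℕ) + 1) : ℚ))) := by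
      intro h
      have h1 := h.fintype_card_le_finrank
      rw [Module.finrank_fin_fun] at h1
      simp at h1
    obtain ⟨a, ha, t0, ht0⟩ := Fintype.not_linearIndependent_iff.mp hdep
    set R : Polynomial ℚ := ∑ t : Fin (r+1), C (a t) * X ^ (t : ℕ) with hR
    have hRz : ∀ z : ℂ, aeval z R = ∑ t : Fin (r+1), (a t : ℂ) * z ^ (t : ℕ) := by
      intro z
      rw [hR, map_sum]
      refine Finset.sum_congr rfl (fun t _ => ?_)
      simp [Polynomial.aeval_C]
    have hRne : R ≠ 0 := by
      intro h0
      apply ht0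
      have := congrArg (fun p => Polynomial.coeff p (t0 : ℕ)) h0
      simp only [hR, Polynomial.finset_sum_coeff, Polynomial.coeff_C_mul,
        Polynomial.coeff_X_pow, Polynomial.coeff_zero, mul_ite, mul_one, mul_zero,
        Fin.val_eq_val] at this
      rwa [Finset.sum_ite_eq Finset.univ t0 a, if_pos (Finset.mem_univ t0)] at this
    -- the key relation
    have hrel : ∀ s : Fin r,
        ∑ m, ((ρ m : ℂ) * aeval (lam m) R * lam m) * lam m ^ (s : ℕ) = 0 := by
      intro s
      have h1 : ∑ t : Fin (r+1), a t * ((N ((t:ℕ) + (s:ℕ) + 1) : ℚ)) = 0 := by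
        have := congrFun ha s
        simpa using this
      have h2 : ∑ t : Fin (r+1), (a t : ℂ) * ((N ((t:ℕ) + (s:ℕ) + 1) : ℂ)) = 0 := by
        have := congrArg (fun x : ℚ => (x : ℂ)) h1
        push_cast at this
        simpa using this
      have h3 : ∑ t : Fin (r+1), (a t : ℂ) * (∑ m, (ρ m : ℂ) * lam m ^ ((t:ℕ) + (s:ℕ) + 1)) = 0 := by
        rw [← h2]
        refine Finset.sum_congr rfl (fun t _ => ?_)
        rw [hN ((t:ℕ) + (s:ℕ) + 1) (by omega)]
      have h4 : ∑ m, ∑ t : Fin (r+1), (a t : ℂ) * ((ρ m : ℂ) * lam m ^ ((t:ℕ) + (s:ℕ) + 1)) = 0 := by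
        rw [Finset.sum_comm]
        simpa only [Finset.mul_sum] using h3
      rw [← h4]
      refine Finset.sum_congr rfl (fun m _ => ?_)
      rw [hRz, Finset.mul_sum, Finset.sum_mul, Finset.sum_mul]
      refine Finset.sum_congr rfl (fun t _ => ?_)
      simp only [pow_succ, pow_add]
      ring
    -- apply Vandermonde
    set S1 : Finset ℂ := Finset.image lam Finset.univ with hS1
    have hcard : S1.card = r := by
      rw [hS1, Finset.card_image_of_injective _ hlam_inj, Finset.card_univ, Fintype.card_fin]
    have hmem : ∀ m, lam m ∈ S1 := fun m => Finset.mem_image_of_mem lam (Finset.mem_univ m)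
    have hvand := vand_aux S1
      (fun z => ∑ m ∈ Finset.univ.filter (fun m => lam m = z), ((ρ m : ℂ) * aeval (lam m) R * lam m))
      (by
        intro t ht
        rw [hcard] at ht
        rw [fib_sum S1 lam hmem]
        exact hrel ⟨t, ht⟩)
    intro m
    have := hvand (lam m) (hmem m)
    simp only [filter_eq_single hlam_inj m, Finset.sum_singleton] at this
    have haev : aeval (lam m) R = 0 := by
      rcases mul_eq_zero.mp this with h | h
      · rcases mul_eq_zero.mp h with h' | h'
        · exact absurd h' (by exact_mod_cast hρ_ne m)
        · exact h'
      · exact absurd h (hlam_ne m)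
    exact IsAlgebraic.isIntegral ⟨R, hRne, haev⟩
  classical
  -- the field generated by the lam's
  set L : IntermediateField ℚ ℂ := IntermediateField.adjoin ℚ (Set.range lam) with hL
  haveI : Finite (Set.range lam) := Set.finite_range lam
  haveI hFD : FiniteDimensional ℚ L :=
    IntermediateField.finiteDimensional_adjoin (fun x _ => by
      obtain ⟨m, rfl⟩ := ‹x ∈ Set.range lam›
      exact halg m)
  have hmemL : ∀ m, lam m ∈ L := fun m =>
    IntermediateField.subset_adjoin ℚ (Set.range lam) ⟨m, rfl⟩
  set μ : Fin r → L := fun m => ⟨lam m, hmemL m⟩ with hμ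
  have hμmap : ∀ m, algebraMap L ℂ (μ m) = lam m := fun m => rfl
  -- an embedding sending μ i to lam j
  have hint : ∀ s : L, IsIntegral ℚ s ∧ ((minpoly ℚ s).map (algebraMap ℚ ℂ)).Splits :=
    fun s => ⟨IsIntegral.of_finite ℚ s, IsAlgClosed.splits _⟩
  have hminμ : minpoly ℚ (μ i) = minpoly ℚ (lam i) := by
    rw [← hμmap i, minpoly.algebraMap_eq (algebraMap L ℂ).injective]
  have haevj : aeval (lam j) (minpoly ℚ (μ i)) = 0 := by
    rw [hminμ, ← minpoly.eq_of_irreducible hq hi]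
    rw [map_mul, hj, zero_mul]
  obtain ⟨φ, hφ⟩ := IntermediateField.exists_algHom_of_splits_of_aeval (F := ℚ) (E := L)
    (K := ℂ) hint haevj
  set ν : Fin r → ℂ := fun m => φ (μ m) with hν
  have hνinj : Function.Injective ν := by
    intro m m' h
    exact hlam_inj (congrArg Subtype.val (φ.injective h))
  have hνi : ν i = lam j := hφ
  -- transferred identity
  have hNν : ∀ k : ℕ, 1 ≤ k → (N k : ℂ) = ∑ m, (ρ m : ℂ) * ν m ^ k := by
    intro k hk
    have hL1 : ((N k : ℤ) : L) = ∑ m, (ρ m : L) * μ m ^ k := by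
      apply (algebraMap L ℂ).injective
      rw [map_intCast, map_sum]
      simp only [map_mul, map_pow, map_intCast, hμmap]
      exact hN k hk
    have := congrArg φ hL1
    rw [map_sum] at this
    simp only [map_mul, map_pow, map_intCast] at this
    exact_mod_cast this
  -- final Vandermonde comparison
  set S2 : Finset ℂ := Finset.image lam Finset.univ ∪ Finset.image ν Finset.univ with hS2
  have hmemlam : ∀ m, lam m ∈ S2 := fun m =>
    Finset.mem_union_left _ (Finset.mem_image_of_mem lam (Finset.mem_univ m))
  have hmemν : ∀ m, ν m ∈ S2 := fun m =>
    Finset.mem_union_right _ (Finset.mem_image_of_mem ν (Finset.mem_univ m))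
  have hvand := vand_aux S2
    (fun z => ((∑ m ∈ Finset.univ.filter (fun m => lam m = z), (ρ m : ℂ))
      - (∑ m ∈ Finset.univ.filter (fun m => ν m = z), (ρ m : ℂ))) * z)
    (by
      intro t ht
      have e1 : ∀ z ∈ S2,
          (((∑ m ∈ Finset.univ.filter (fun m => lam m = z), (ρ m : ℂ))
            - (∑ m ∈ Finset.univ.filter (fun m => ν m = z), (ρ m : ℂ))) * z) * z ^ t
          = (∑ m ∈ Finset.univ.filter (fun m => lam m = z), (ρ m : ℂ)) * z ^ (t+1)
            - (∑ m ∈ Finset.univ.filter (fun m => ν m = z), (ρ m : ℂ)) * z ^ (t+1) := by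
        intro z _
        rw [pow_succ]
        ring
      rw [Finset.sum_congr rfl e1, Finset.sum_sub_distrib,
        fib_sum S2 lam hmemlam, fib_sum S2 ν hmemν,
        ← Finset.sum_congr rfl (fun m _ => rfl), ← hN (t+1) (by omega), ← hNν (t+1) (by omega),
        sub_self])
  have hfinal := hvand (lam j) (hmemlam j)
  have hflam : Finset.univ.filter (fun m => lam m = lam j) = {j} := by
    ext m; simp [hlam_inj.eq_iff]
  have hfν : Finset.univ.filter (fun m => ν m = lam j) = {i} := by
    ext m
    simp only [Finset.mem_filter, Finset.mem_univ, true_and, Finset.mem_singleton]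
    rw [← hνi]
    exact ⟨fun h => hνinj h, fun h => by rw [h]⟩
  simp only [hflam, hfν, Finset.sum_singleton] at hfinal
  have : ((ρ j : ℂ) - (ρ i : ℂ)) = 0 := by
    rcases mul_eq_zero.mp hfinal with h | h
    · exact h
    · exact absurd h (hlam_ne j)
  have : (ρ j : ℂ) = (ρ i : ℂ) := by linear_combination this
  exact_mod_cast this.symm
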